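/- Let k ≥ 2 and m ≥ (432k)² be integers with m − k even. Then ρ(K^{k−2}_{2,(m−k+2)/2}) = (1/2)·√(2m + 2·√(2k² − 2km + m² − 8k + 4m + 8)); equivalently, it is the largest root of x⁴ − m·x² + (1/2)km − (1/2)k² − m + 2k − 2 = 0, and moreover ρ(K^{k−2}_{2,(m−k+2)/2}) > √(m − k). -/

import Mathlib

open SimpleGraph

/-- The `l`-edge-connectivity of a graph: the minimum number of edges whose removal
leaves a graph with at least `l` connected components, if the graph has at least `l`
vertices; otherwise the number of vertices. -/
noncomputable def edgeConnL {V : Type*} (l : ℕ) (G : SimpleGraph V) : ℕ :=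
  if l ≤ Nat.card V then
    sInf {c : ℕ | ∃ F : Set (Sym2 V), F ⊆ G.edgeSet ∧ F.ncard = c ∧
      l ≤ Nat.card (G.deleteEdges F).ConnectedComponent}
  else Nat.card V

/-- A graph is minimally `(k,l)`-edge-connected if it is connected, its
`l`-edge-connectivity is at least `k`, and deleting any edge drops the
`l`-edge-connectivity below `k`. -/
def IsMinimallyKLEdgeConnected {V : Type*} (k l : ℕ) (G : SimpleGraph V) : Prop :=
  G.Connected ∧ k ≤ edgeConnL l G ∧
    ∀ e ∈ G.edgeSet, edgeConnL l (G.deleteEdges {e}) < k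

/-- The real adjacency matrix of a simple graph. -/
noncomputable def adjMat {V : Type*} (G : SimpleGraph V) : Matrix V V ℝ :=
  letI := Classical.decRel G.Adj
  G.adjMatrix ℝ

/-- The spectral radius of a graph: the largest (real) eigenvalue of its adjacency matrix. -/
noncomputable def specRad {V : Type*} [Fintype V] [DecidableEq V]
    (G : SimpleGraph V) : ℝ :=
  sSup (spectrum ℝ (adjMat G))

abbrev KbookV (p s : ℕ) : Type := (Unit ⊕ Unit) ⊕ (Fin s ⊕ Fin p)

/-- `K^{p}_{2,s}`: the graph obtained from the disjoint union of the star `K_{1,p}` and the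
complete bipartite graph `K_{2,s}` by identifying the centre of the star with one of the two
vertices of degree `s` of `K_{2,s}`.  Here `Sum.inl (Sum.inl _)` is the identified vertex,
`Sum.inl (Sum.inr _)` is the other vertex of the part of size two, `Fin s` is the part of
size `s` and `Fin p` are the pendant vertices. -/
def Kbook (p s : ℕ) : SimpleGraph (KbookV p s) :=
  SimpleGraph.fromRel (fun a b =>
    match a, b with
    | Sum.inl (Sum.inl _), Sum.inr _ => True
    | Sum.inl (Sum.inr _), Sum.inr (Sum.inl _) => True
    | _, _ => False)

theorem mem_spec_iff {n : Type*} [Fintype n] [DecidableEq n] (A : Matrix n n ℝ) (μ : ℝ) :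
    μ ∈ spectrum ℝ A ↔ ∃ v : n → ℝ, v ≠ 0 ∧ A.mulVec v = μ • v := by
  have key : ∀ v : n → ℝ, ((algebraMap ℝ (Matrix n n ℝ)) μ - A).mulVec v = μ • v - A.mulVec v := by
    intro v
    rw [Matrix.sub_mulVec]
    congr 1
    funext i
    simp [Matrix.algebraMap_eq_diagonal, Matrix.mulVec_diagonal]
  rw [spectrum.mem_iff, Matrix.isUnit_iff_isUnit_det, isUnit_iff_ne_zero, not_ne_iff,
    ← Matrix.exists_mulVec_eq_zero_iff]
  constructor
  · rintro ⟨v, hv, h⟩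
    rw [key, sub_eq_zero] at h
    exact ⟨v, hv, h.symm⟩
  · rintro ⟨v, hv, h⟩
    exact ⟨v, hv, by rw [key, h, sub_self]⟩

lemma mulVec_u {p s : ℕ} (v : KbookV p s → ℝ) :
    (adjMat (Kbook p s)).mulVec v (Sum.inl (Sum.inl ())) =
      (∑ i : Fin s, v (Sum.inr (Sum.inl i))) + ∑ j : Fin p, v (Sum.inr (Sum.inr j)) := by
  simp [adjMat, Matrix.mulVec, dotProduct, Fintype.sum_sum_type, Kbook,
    SimpleGraph.fromRel_adj, SimpleGraph.adjMatrix, Matrix.of_apply]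

lemma mulVec_w {p s : ℕ} (v : KbookV p s → ℝ) :
    (adjMat (Kbook p s)).mulVec v (Sum.inl (Sum.inr ())) =
      ∑ i : Fin s, v (Sum.inr (Sum.inl i)) := by
  simp [adjMat, Matrix.mulVec, dotProduct, Fintype.sum_sum_type, Kbook,
    SimpleGraph.fromRel_adj, SimpleGraph.adjMatrix, Matrix.of_apply]

lemma mulVec_S {p s : ℕ} (v : KbookV p s → ℝ) (i : Fin s) :
    (adjMat (Kbook p s)).mulVec v (Sum.inr (Sum.inl i)) =
      v (Sum.inl (Sum.inl ())) + v (Sum.inl (Sum.inr ())) := by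
  simp [adjMat, Matrix.mulVec, dotProduct, Fintype.sum_sum_type, Kbook,
    SimpleGraph.fromRel_adj, SimpleGraph.adjMatrix, Matrix.of_apply]

lemma mulVec_P {p s : ℕ} (v : KbookV p s → ℝ) (j : Fin p) :
    (adjMat (Kbook p s)).mulVec v (Sum.inr (Sum.inr j)) =
      v (Sum.inl (Sum.inl ())) := by
  simp [adjMat, Matrix.mulVec, dotProduct, Fintype.sum_sum_type, Kbook,
    SimpleGraph.fromRel_adj, SimpleGraph.adjMatrix, Matrix.of_apply]

/-- every spectrum element is 0 or a root of the quartic -/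
lemma spec_sub {p s : ℕ} (hs : 1 ≤ s) {μ : ℝ}
    (hμ : μ ∈ spectrum ℝ (adjMat (Kbook p s))) :
    μ = 0 ∨ μ ^ 4 - ((p : ℝ) + 2 * s) * μ ^ 2 + (p : ℝ) * s = 0 := by
  rcases (mem_spec_iff _ _).1 hμ with ⟨v, hv, hev⟩
  by_cases h0 : μ = 0
  · exact Or.inl h0
  right
  have hev' : ∀ a, (adjMat (Kbook p s)).mulVec v a = μ * v a := fun a => by
    rw [hev]; rfl
  set a := v (Sum.inl (Sum.inl ())) with ha
  set b := v (Sum.inl (Sum.inr ())) with hb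
  have hS : ∀ i : Fin s, μ * v (Sum.inr (Sum.inl i)) = a + b := fun i => by
    rw [← hev' _, mulVec_S]
  have hP : ∀ j : Fin p, μ * v (Sum.inr (Sum.inr j)) = a := fun j => by
    rw [← hev' _, mulVec_P]
  have hu : μ * a = (∑ i : Fin s, v (Sum.inr (Sum.inl i))) + ∑ j : Fin p, v (Sum.inr (Sum.inr j)) := by
    rw [← hev' _, mulVec_u]
  have hw : μ * b = ∑ i : Fin s, v (Sum.inr (Sum.inl i)) := by
    rw [← hev' _, mulVec_w]
  have hC : μ * ∑ i : Fin s, v (Sum.inr (Sum.inl i)) = s * (a + b) := by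
    rw [Finset.mul_sum]
    simp only [hS, Finset.sum_const, Finset.card_univ, Fintype.card_fin, nsmul_eq_mul]
  have hD : μ * ∑ j : Fin p, v (Sum.inr (Sum.inr j)) = p * a := by
    rw [Finset.mul_sum]
    simp only [hP, Finset.sum_const, Finset.card_univ, Fintype.card_fin, nsmul_eq_mul]
  -- E1 : μ² a = (s+p) a + s b ; E2 : μ² b = s a + s b
  have E1 : μ ^ 2 * a = ((s : ℝ) + p) * a + s * b := by
    have := congrArg (μ * ·) hu
    simp only [mul_add] at this
    rw [hC, hD] at this
    nlinarith [this]
  have E2 : μ ^ 2 * b = (s : ℝ) * a + s * b := by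
    have := congrArg (μ * ·) hw
    rw [hC] at this
    nlinarith [this]
  -- a ≠ 0
  have hane : a ≠ 0 := by
    intro haz
    have hbz : b = 0 := by
      have hs' : (1:ℝ) ≤ (s:ℝ) := by exact_mod_cast hs
      have : (s : ℝ) * b = 0 := by nlinarith [E1]
      rcases mul_eq_zero.1 this with h | h
      · linarith
      · exact h
    apply hv
    funext x
    rcases x with (⟨⟩ | ⟨⟩) | (i | j)
    · simpa using haz
    · simpa using hbz
    · have := hS i; rw [haz, hbz] at this; simp at this
      rcases this with h | h
      · exact absurd h h0
      · simpa using h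
    · have := hP j; rw [haz] at this
      rcases mul_eq_zero.1 this with h | h
      · exact absurd h h0
      · simpa using h
  have key : (μ ^ 4 - ((p : ℝ) + 2 * s) * μ ^ 2 + (p : ℝ) * s) * a = 0 := by
    linear_combination (μ ^ 2 - (s : ℝ)) * E1 + (s : ℝ) * E2
  rcases mul_eq_zero.1 key with h | h
  · exact h
  · exact absurd h hane

/-- nonzero quartic roots are in the spectrum -/
lemma spec_mem {p s : ℕ} {x : ℝ} (hx0 : x ≠ 0)
    (hroot : x ^ 4 - ((p : ℝ) + 2 * s) * x ^ 2 + (p : ℝ) * s = 0) :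
    x ∈ spectrum ℝ (adjMat (Kbook p s)) := by
  have hxs : x ^ 2 - (s : ℝ) ≠ 0 := by
    intro h
    have hx2 : x ^ 2 = (s : ℝ) := by linarith
    have hs0 : (s : ℝ) = 0 := by nlinarith [hroot]
    rw [hs0] at hx2
    exact hx0 (by nlinarith [hx2])
  rw [mem_spec_iff]
  refine ⟨fun a => match a with
    | Sum.inl (Sum.inl _) => x * (x ^ 2 - s)
    | Sum.inl (Sum.inr _) => (s : ℝ) * x
    | Sum.inr (Sum.inl _) => x ^ 2
    | Sum.inr (Sum.inr _) => x ^ 2 - (s : ℝ), ?_, ?_⟩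
  · intro h
    have := congrFun h (Sum.inl (Sum.inl ()))
    simp only [Pi.zero_apply] at this
    exact mul_ne_zero hx0 hxs this
  · funext a
    rcases a with (⟨⟩ | ⟨⟩) | (i | j)
    · rw [mulVec_u]
      simp only [Finset.sum_const, Finset.card_univ, Fintype.card_fin, nsmul_eq_mul,
        Pi.smul_apply, smul_eq_mul]
      linear_combination -hroot
    · rw [mulVec_w]
      simp only [Finset.sum_const, Finset.card_univ, Fintype.card_fin, nsmul_eq_mul,
        Pi.smul_apply, smul_eq_mul]
      ring
    · rw [mulVec_S]
      simp only [Pi.smul_apply, smul_eq_mul]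
      ring
    · rw [mulVec_P]
      simp only [Pi.smul_apply, smul_eq_mul]

set_option maxHeartbeats 2000000 in
/-- Let `k ≥ 2` and `m ≥ (432k)²` with `m − k` even.  Then
`ρ(K^{k−2}_{2,(m−k+2)/2}) = √(2m + 2√(2k² − 2km + m² − 8k + 4m + 8)) / 2`; equivalently,
it is the largest root of `x⁴ − m x² + (1/2)km − (1/2)k² − m + 2k − 2 = 0`, and moreover
`ρ(K^{k−2}_{2,(m−k+2)/2}) > √(m − k)`. -/
theorem spectral_radius_Kbook_size (k m : ℕ) (hk : 2 ≤ k) (hm : (432 * k) ^ 2 ≤ m)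
    (hpar : (m - k) % 2 = 0) :
    specRad (Kbook (k - 2) ((m - k + 2) / 2)) =
      Real.sqrt (2 * (m : ℝ) +
        2 * Real.sqrt (2 * (k : ℝ) ^ 2 - 2 * (k : ℝ) * (m : ℝ) + (m : ℝ) ^ 2
          - 8 * (k : ℝ) + 4 * (m : ℝ) + 8)) / 2 ∧
    IsGreatest {x : ℝ | x ^ 4 - (m : ℝ) * x ^ 2 + (1 / 2) * (k : ℝ) * (m : ℝ)
        - (1 / 2) * (k : ℝ) ^ 2 - (m : ℝ) + 2 * (k : ℝ) - 2 = 0}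
      (specRad (Kbook (k - 2) ((m - k + 2) / 2))) ∧
    Real.sqrt ((m : ℝ) - (k : ℝ)) < specRad (Kbook (k - 2) ((m - k + 2) / 2)) := by
  have hkm2 : k + 2 ≤ m := by
    have h1 : k + 2 ≤ 432 * k := by omega
    have h2 : 432 * k ≤ (432 * k) ^ 2 := Nat.le_self_pow (by norm_num) _
    omega
  obtain ⟨t, ht⟩ : ∃ t, m - k = 2 * t := ⟨(m - k) / 2, by omega⟩
  have hmkt : m = k + 2 * t := by omega
  have hs_eq : (m - k + 2) / 2 = t + 1 := by omega
  have ht1 : 1 ≤ t := by omega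
  set K : ℝ := (k : ℝ) with hK
  set M : ℝ := (m : ℝ) with hM
  set T : ℝ := (t : ℝ) with hT
  have hMK : M = K + 2 * T := by rw [hM, hK, hT, hmkt]; push_cast; ring
  have hK2 : (2 : ℝ) ≤ K := by rw [hK]; exact_mod_cast hk
  have hT1 : (1 : ℝ) ≤ T := by rw [hT]; exact_mod_cast ht1
  have hpcast : ((k - 2 : ℕ) : ℝ) = K - 2 := by
    rw [hK]; push_cast [hk]; ring
  have hscast : (((m - k + 2) / 2 : ℕ) : ℝ) = T + 1 := by
    rw [hs_eq, hT]; push_cast; ring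
  set D : ℝ := 2 * K ^ 2 - 2 * K * M + M ^ 2 - 8 * K + 4 * M + 8 with hD
  have hD_eq : D = (K - 2) ^ 2 + 4 * (T + 1) ^ 2 := by rw [hD, hMK]; ring
  have hD0 : 0 ≤ D := by rw [hD_eq]; positivity
  set d : ℝ := Real.sqrt D with hd
  have hd0 : 0 ≤ d := Real.sqrt_nonneg _
  have hd2 : d ^ 2 = D := Real.sq_sqrt hD0
  have hdps : d ^ 2 = M ^ 2 - 4 * ((K - 2) * (T + 1)) := by rw [hd2, hD, hMK]; ring
  have hdpos : 0 < d := by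
    rw [hd]
    apply Real.sqrt_pos.2
    rw [hD_eq]
    nlinarith [sq_nonneg (K - 2)]
  set ρ : ℝ := Real.sqrt (2 * M + 2 * d) / 2 with hρ
  have hρ0 : 0 ≤ ρ := by rw [hρ]; positivity
  have hρsq : ρ ^ 2 = (M + d) / 2 := by
    rw [hρ, div_pow, Real.sq_sqrt (by nlinarith : 0 ≤ 2 * M + 2 * d)]
    ring
  clear_value K M T D d ρ
  have hρpos : 0 < ρ := by
    rcases hρ0.lt_or_eq with h | h
    · exact h
    · exfalso; rw [← h] at hρsq; nlinarith
  have hroot : ρ ^ 4 - M * ρ ^ 2 + (K - 2) * (T + 1) = 0 := by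
    have h4 : ρ ^ 4 = ((M + d) / 2) ^ 2 := by
      rw [show ρ ^ 4 = (ρ ^ 2) ^ 2 by ring, hρsq]
    rw [h4, hρsq]
    linear_combination (1 / 4 : ℝ) * hdps
  -- upper bound for quartic roots
  have hub : ∀ x : ℝ, x ^ 4 - M * x ^ 2 + (K - 2) * (T + 1) = 0 → x ≤ ρ := by
    intro x hx
    have hfac : (x ^ 2 - (M + d) / 2) * (x ^ 2 - (M - d) / 2) = 0 := by
      linear_combination hx - (1 / 4 : ℝ) * hdps
    have hx2 : x ^ 2 ≤ ρ ^ 2 := by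
      rw [hρsq]
      rcases mul_eq_zero.1 hfac with h | h
      · linarith
      · linarith
    refine le_trans (le_abs_self x) ?_
    rw [← Real.sqrt_sq_eq_abs, ← Real.sqrt_sq hρ0]
    exact Real.sqrt_le_sqrt hx2
  -- spectrum facts
  have hs1 : 1 ≤ (m - k + 2) / 2 := by omega
  have hmem : ρ ∈ spectrum ℝ (adjMat (Kbook (k - 2) ((m - k + 2) / 2))) := by
    apply spec_mem hρpos.ne'
    rw [hpcast, hscast]
    linear_combination hroot + ρ ^ 2 * hMK
  have hub' : ∀ μ ∈ spectrum ℝ (adjMat (Kbook (k - 2) ((m - k + 2) / 2))), μ ≤ ρ := by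
    intro μ hμ
    rcases spec_sub hs1 hμ with h | h
    · rw [h]; exact hρ0
    · rw [hpcast, hscast] at h
      exact hub μ (by linear_combination h - μ ^ 2 * hMK)
  have hspec : specRad (Kbook (k - 2) ((m - k + 2) / 2)) = ρ := by
    rw [specRad]
    exact IsGreatest.csSup_eq ⟨hmem, hub'⟩
  have hconst : (1 / 2) * K * M - (1 / 2) * K ^ 2 - M + 2 * K - 2 = (K - 2) * (T + 1) := by
    rw [hMK]; ring
  refine ⟨hspec, ⟨?_, ?_⟩, ?_⟩
  · show _ ∈ {x : ℝ | x ^ 4 - M * x ^ 2 + (1 / 2) * K * M - (1 / 2) * K ^ 2 - M + 2 * K - 2 = 0}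
    rw [Set.mem_setOf_eq, hspec]
    linear_combination hroot + hconst
  · intro x hx
    rw [Set.mem_setOf_eq] at hx
    rw [hspec]
    exact hub x (by linear_combination hx - hconst)
  · rw [hspec]
    have hMKnn : (0 : ℝ) ≤ M - K := by rw [hMK]; linarith
    have h3 : M - K < ρ ^ 2 := by
      rw [hρsq, hMK]
      have hd3 : 2 * T - K < d := by
        rcases le_or_gt (2 * T - K) 0 with h | h
        · exact lt_of_le_of_lt h hdpos
        · nlinarith [hd2, hD_eq, hd0]
      linarith
    calc Real.sqrt (M - K) < Real.sqrt (ρ ^ 2) := Real.sqrt_lt_sqrt hMKnn h3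
      _ = ρ := Real.sqrt_sq hρ0
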